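/- arXiv:1403.7368 — 2 statements merged into one kernel-verified Lean document; each statement's English description precedes it below -/
import Mathlib

section
/- Let d ≥ 1 and let α ∈ ℕ^d be a multi-index with |α| = α_1 + ... + α_d. Then for all X ≥ 0, ∫_{Ω_d(X)} L_{α_d}(X − t_1 − ... − t_{d−1}) ∏_{j=1}^{d−1} L_{α_j}(t_j) dt_1...dt_{d−1} = Σ_{k=0}^{d−1} C(d−1,k) (−1)^k L_{|α|+k}(X), where Ω_d(X) = { (t_1,...,t_{d−1}) : t_j > 0, t_1 + ... + t_{d−1} < X } (for d = 1 the left-hand side is L_{α_1}(X)). -/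
open MeasureTheory Finset

noncomputable section

/-- The `n`-th Laguerre polynomial `L_n(x) = Σ_{k=0}^n (n choose k) (−x)^k / k!`. -/
def laguerreFun (n : ℕ) (x : ℝ) : ℝ :=
  ∑ k ∈ Finset.range (n + 1), (n.choose k : ℝ) * (-x) ^ k / (k.factorial : ℝ)

lemma continuous_laguerreFun (n : ℕ) : Continuous (laguerreFun n) := by
  unfold laguerreFun
  exact continuous_finset_sum _ fun k _ => by continuity

lemma beta_nat (j i : ℕ) (X : ℝ) :
    ∫ x in (0:ℝ)..X, x ^ i * (X - x) ^ j
      = (i.factorial * j.factorial : ℝ) / ((i + j + 1).factorial) * X ^ (i + j + 1) := by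
  induction j generalizing i with
  | zero =>
    simp only [pow_zero, mul_one, integral_pow]
    rw [Nat.factorial_zero, Nat.add_zero, Nat.factorial_succ]
    push_cast
    field_simp
    ring
  | succ j IH =>
    have h1 : IntervalIntegrable (fun x : ℝ => x ^ i * (X - x) ^ (j+1)) volume 0 X :=
      (by continuity : Continuous fun x : ℝ => x ^ i * (X - x) ^ (j+1)).intervalIntegrable _ _
    have h2 : IntervalIntegrable (fun x : ℝ => ((j:ℝ)+1)/((i:ℝ)+1) * (x ^ (i+1) * (X - x) ^ j)) volume 0 X :=
      (by continuity : Continuous fun x : ℝ => ((j:ℝ)+1)/((i:ℝ)+1) * (x ^ (i+1) * (X - x) ^ j)).intervalIntegrable _ _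
    have hder : ∀ x ∈ Set.uIcc (0:ℝ) X,
        HasDerivAt (fun x : ℝ => x ^ (i+1) / ((i:ℝ)+1) * (X - x) ^ (j+1))
          (x ^ i * (X - x) ^ (j+1) - ((j:ℝ)+1)/((i:ℝ)+1) * (x ^ (i+1) * (X - x) ^ j)) x := by
      intro x _
      have hA : HasDerivAt (fun x : ℝ => x ^ (i+1) / ((i:ℝ)+1)) (x ^ i) x := by
        have := (hasDerivAt_pow (i+1) x).div_const ((i:ℝ)+1)
        refine this.congr_deriv ?_
        have : ((i:ℝ)+1) ≠ 0 := by positivity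
        rw [Nat.add_sub_cancel]; push_cast
        field_simp
      have hB : HasDerivAt (fun x : ℝ => (X - x) ^ (j+1)) (-(((j:ℝ)+1) * (X - x) ^ j)) x := by
        have hb : HasDerivAt (fun x : ℝ => X - x) (-1) x := (hasDerivAt_id x).const_sub X
        have := (hasDerivAt_pow (j+1) (X - x)).comp x hb
        refine this.congr_deriv ?_
        push_cast
        ring
      have := hA.mul hB
      refine this.congr_deriv ?_
      have hi : ((i:ℝ)+1) ≠ 0 := by positivity
      field_simp
      ring
    have key := intervalIntegral.integral_eq_sub_of_hasDerivAt hder (h1.sub h2)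
    rw [intervalIntegral.integral_sub h1 h2] at key
    have hz : X ^ (i + 1) / ((i:ℝ) + 1) * (X - X) ^ (j + 1) - (0:ℝ) ^ (i + 1) / ((i:ℝ) + 1) * (X - 0) ^ (j + 1) = 0 := by
      simp [zero_pow, Nat.succ_ne_zero]
    rw [hz, sub_eq_zero] at key
    rw [key, intervalIntegral.integral_const_mul, IH (i+1)]
    have e1 : (i + 1) + j + 1 = i + (j+1) + 1 := by ring
    rw [e1]
    have h0 : ((i + (j+1) + 1).factorial : ℝ) ≠ 0 := by positivity
    have hi : ((i:ℝ)+1) ≠ 0 := by positivity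
    rw [Nat.factorial_succ (i), Nat.factorial_succ (j)]
    push_cast
    field_simp

lemma choose_double_sum (m n : ℕ) (f : ℕ → ℝ) :
    ∑ i ∈ range (m+1), ∑ j ∈ range (n+1), (m.choose i : ℝ) * (n.choose j) * f (i+j)
      = ∑ k ∈ range (m+n+1), ((m+n).choose k : ℝ) * f k := by
  have hR : ∑ k ∈ range (m+n+1), ((m+n).choose k : ℝ) * f k
      = ∑ x ∈ (range (m+n+1)).sigma (fun k => Finset.HasAntidiagonal.antidiagonal k),
          (m.choose x.2.1 : ℝ) * (n.choose x.2.2) * f (x.2.1 + x.2.2) := by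
    rw [Finset.sum_sigma]
    refine Finset.sum_congr rfl fun k _ => ?_
    rw [Nat.add_choose_eq]
    push_cast
    rw [Finset.sum_mul]
    refine Finset.sum_congr rfl fun ij hij => ?_
    rw [Finset.HasAntidiagonal.mem_antidiagonal.mp hij]
  rw [hR, ← Finset.sum_product']
  set P' : Finset (ℕ × ℕ) := (range (m+n+1) ×ˢ range (m+n+1)).filter (fun p => p.1 + p.2 ≤ m + n) with hP'
  have hsub : range (m+1) ×ˢ range (n+1) ⊆ P' := by
    intro p hp
    rw [Finset.mem_product, Finset.mem_range, Finset.mem_range] at hp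
    simp only [hP', Finset.mem_filter, Finset.mem_product, Finset.mem_range]
    omega
  rw [Finset.sum_subset hsub ?_]
  · refine Finset.sum_nbij' (fun p => ⟨p.1 + p.2, p⟩) (fun x => x.2) ?_ ?_ ?_ ?_ ?_
    · intro p hp
      simp only [hP', Finset.mem_filter, Finset.mem_product, Finset.mem_range] at hp
      simp only [Finset.mem_sigma, Finset.mem_range, Finset.HasAntidiagonal.mem_antidiagonal]
      exact ⟨by omega, trivial⟩
    · intro x hx
      simp only [Finset.mem_sigma, Finset.mem_range, Finset.HasAntidiagonal.mem_antidiagonal] at hx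
      simp only [hP', Finset.mem_filter, Finset.mem_product, Finset.mem_range]
      omega
    · intro p _; rfl
    · intro x hx
      simp only [Finset.mem_sigma, Finset.mem_range, Finset.HasAntidiagonal.mem_antidiagonal] at hx
      exact Sigma.ext (by simp [hx.2]) (by simp)
    · intro p _; rfl
  · intro p hp hnp
    rw [Finset.mem_product, Finset.mem_range, Finset.mem_range] at hnp
    simp only [hP', Finset.mem_filter, Finset.mem_product, Finset.mem_range] at hp
    push_neg at hnp
    rcases Nat.lt_or_ge m p.1 with h | h
    · rw [Nat.choose_eq_zero_of_lt h]; simp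
    · rw [Nat.choose_eq_zero_of_lt (by omega : n < p.2)]; simp

lemma laguerre_diff (N : ℕ) (X : ℝ) :
    (∑ k ∈ range (N + 1), (N.choose k : ℝ) * (-X) ^ k / (k.factorial : ℝ))
      - (∑ k ∈ range (N + 2), ((N+1).choose k : ℝ) * (-X) ^ k / (k.factorial : ℝ))
      = ∑ k ∈ range (N+1), (N.choose k : ℝ) * ((-1)^k * X^(k+1) / ((k+1).factorial : ℝ)) := by
  rw [Finset.sum_range_succ' (fun k => (N.choose k : ℝ) * (-X) ^ k / (k.factorial : ℝ)) N,
      Finset.sum_range_succ' (fun k => ((N+1).choose k : ℝ) * (-X) ^ k / (k.factorial : ℝ)) (N+1)]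
  simp only [Nat.choose_zero_right, pow_zero, Nat.factorial_zero]
  have hext : ∑ k ∈ range (N+1), ((N.choose (k+1) : ℝ)) * (-X) ^ (k+1) / ((k+1).factorial : ℝ)
      = ∑ k ∈ range N, ((N.choose (k+1) : ℝ)) * (-X) ^ (k+1) / ((k+1).factorial : ℝ) := by
    rw [Finset.sum_range_succ, Nat.choose_succ_self]
    simp
  rw [← hext, add_sub_add_right_eq_sub, ← Finset.sum_sub_distrib]
  refine Finset.sum_congr rfl fun k hk => ?_
  rw [Nat.choose_succ_succ N k]
  push_cast
  have h1 : ((k+1).factorial : ℝ) ≠ 0 := by positivity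
  field_simp
  ring

lemma pascal_sum (D : ℕ) (g : ℕ → ℝ) :
    ∑ k ∈ range (D+1), (D.choose k : ℝ) * (-1)^k * (g k - g (k+1))
      = ∑ k ∈ range (D+2), ((D+1).choose k : ℝ) * (-1)^k * g k := by
  simp only [mul_sub]
  rw [Finset.sum_sub_distrib]
  rw [Finset.sum_range_succ' (fun k => ((D+1).choose k : ℝ) * (-1)^k * g k) (D+1)]
  simp only [Nat.choose_zero_right, pow_zero, Nat.cast_one, one_mul, mul_one]
  have hsplit : ∑ k ∈ range (D+1), (((D+1).choose (k+1) : ℝ)) * (-1)^(k+1) * g (k+1)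
      = (∑ k ∈ range (D+1), ((D.choose (k+1) : ℝ)) * (-1)^(k+1) * g (k+1))
        - ∑ k ∈ range (D+1), ((D.choose k : ℝ)) * (-1)^k * g (k+1) := by
    rw [← Finset.sum_sub_distrib]
    refine Finset.sum_congr rfl fun k _ => ?_
    rw [Nat.choose_succ_succ D k]
    push_cast
    ring
  rw [hsplit]
  have hA : ∑ k ∈ range (D+1), (D.choose k : ℝ) * (-1)^k * g k
      = (∑ k ∈ range (D+1), ((D.choose (k+1) : ℝ)) * (-1)^(k+1) * g (k+1)) + g 0 := by
    rw [Finset.sum_range_succ' (fun k => (D.choose k : ℝ) * (-1)^k * g k) D]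
    simp only [Nat.choose_zero_right, pow_zero, Nat.cast_one, one_mul, mul_one]
    rw [Finset.sum_range_succ]
    simp [Nat.choose_succ_self]
  rw [hA]
  ring

lemma laguerre_conv (m n : ℕ) (X : ℝ) :
    ∫ x in (0:ℝ)..X, laguerreFun m x * laguerreFun n (X - x)
      = laguerreFun (m+n) X - laguerreFun (m+n+1) X := by
  have step1 : Set.EqOn (fun x => laguerreFun m x * laguerreFun n (X - x))
      (fun x => ∑ i ∈ range (m+1), ∑ j ∈ range (n+1),
        ((m.choose i : ℝ) * (n.choose j) * ((-1)^(i+j) / ((i.factorial : ℝ) * (j.factorial))))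
          * (x^i * (X-x)^j)) (Set.uIcc 0 X) := by
    intro x _
    simp only [laguerreFun, Finset.sum_mul_sum]
    refine Finset.sum_congr rfl fun i _ => Finset.sum_congr rfl fun j _ => ?_
    rw [neg_pow x, neg_pow (X - x), pow_add]
    ring
  have hII : ∀ (i j : ℕ), IntervalIntegrable (fun x : ℝ =>
      ((m.choose i : ℝ) * (n.choose j) * ((-1)^(i+j) / ((i.factorial : ℝ) * (j.factorial))))
        * (x^i * (X-x)^j)) volume 0 X := by
    intro i j
    apply Continuous.intervalIntegrable
    continuity
  have hII2 : ∀ (i : ℕ), IntervalIntegrable (fun x : ℝ => ∑ j ∈ range (n+1),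
      ((m.choose i : ℝ) * (n.choose j) * ((-1)^(i+j) / ((i.factorial : ℝ) * (j.factorial))))
        * (x^i * (X-x)^j)) volume 0 X := by
    intro i
    apply Continuous.intervalIntegrable
    exact continuous_finset_sum _ fun j _ => by continuity
  rw [intervalIntegral.integral_congr step1]
  rw [intervalIntegral.integral_finset_sum (fun i _ => hII2 i)]
  have step2 : ∀ i ∈ range (m+1),
      (∫ x in (0:ℝ)..X, ∑ j ∈ range (n+1),
        ((m.choose i : ℝ) * (n.choose j) * ((-1)^(i+j) / ((i.factorial : ℝ) * (j.factorial))))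
          * (x^i * (X-x)^j))
      = ∑ j ∈ range (n+1), (m.choose i : ℝ) * (n.choose j) *
          ((-1)^(i+j) * X^(i+j+1) / (((i+j)+1).factorial : ℝ)) := by
    intro i _
    rw [intervalIntegral.integral_finset_sum (fun j _ => hII i j)]
    refine Finset.sum_congr rfl fun j _ => ?_
    rw [intervalIntegral.integral_const_mul, beta_nat j i X]
    have h1 : ((i.factorial : ℝ)) ≠ 0 := by positivity
    have h2 : ((j.factorial : ℝ)) ≠ 0 := by positivity
    have h3 : (((i+j+1).factorial : ℝ)) ≠ 0 := by positivity
    have : (i+j)+1 = i+j+1 := rfl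
    rw [this]
    field_simp
  rw [Finset.sum_congr rfl step2, choose_double_sum m n
    (fun k => (-1)^k * X^(k+1) / ((k+1).factorial : ℝ))]
  have := laguerre_diff (m+n) X
  simp only [laguerreFun]
  rw [show m+n+1+1 = (m+n)+2 from rfl, ← this]

lemma isClosed_simplex (d : ℕ) (X : ℝ) :
    IsClosed {t : Fin d → ℝ | (∀ j, 0 ≤ t j) ∧ (∑ j, t j) ≤ X} := by
  have : {t : Fin d → ℝ | (∀ j, 0 ≤ t j) ∧ (∑ j, t j) ≤ X}
      = (⋂ j, {t : Fin d → ℝ | 0 ≤ t j}) ∩ {t : Fin d → ℝ | (∑ j, t j) ≤ X} := by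
    ext t; simp [Set.mem_iInter]
  rw [this]
  exact (isClosed_iInter fun j => isClosed_le continuous_const (continuous_apply j)).inter
    (isClosed_le (continuous_finset_sum _ fun j _ => continuous_apply j) continuous_const)

lemma isCompact_simplex (d : ℕ) (X : ℝ) :
    IsCompact {t : Fin d → ℝ | (∀ j, 0 ≤ t j) ∧ (∑ j, t j) ≤ X} := by
  refine IsCompact.of_isClosed_subset (isCompact_Icc (a := (0 : Fin d → ℝ)) (b := fun _ => X))
    (isClosed_simplex d X) ?_
  intro t ht
  rcases ht with ⟨h0, hs⟩
  constructor
  · intro j; exact h0 j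
  · intro j
    calc t j ≤ ∑ i, t i := Finset.single_le_sum (fun i _ => h0 i) (Finset.mem_univ j)
    _ ≤ X := hs

theorem laguerre_simplex_integral (d : ℕ) (α : Fin (d + 1) → ℕ) (X : ℝ) (hX : 0 ≤ X) :
    (∫ t in {t : Fin d → ℝ | (∀ j, 0 ≤ t j) ∧ (∑ j, t j) ≤ X},
        laguerreFun (α (Fin.last d)) (X - ∑ j, t j) *
          ∏ j : Fin d, laguerreFun (α j.castSucc) (t j)) =
      ∑ k ∈ Finset.range (d + 1),
        (d.choose k : ℝ) * (-1 : ℝ) ^ k * laguerreFun ((∑ j, α j) + k) X := by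
  induction d generalizing X with
  | zero =>
    have hset : {t : Fin 0 → ℝ | (∀ j, 0 ≤ t j) ∧ (∑ j, t j) ≤ X} = Set.univ := by
      ext t
      simp [hX]
    rw [hset]
    simp only [Finset.univ_eq_empty, Finset.sum_empty, Finset.prod_empty, sub_zero, mul_one]
    rw [setIntegral_univ, integral_const]
    simp only [smul_eq_mul, Fin.sum_univ_one, Fin.last]
    have hvol : volume.real (Set.univ : Set (Fin 0 → ℝ)) = 1 := by
      rw [measureReal_def, MeasureTheory.volume_pi, Measure.pi_univ]
      simp
    rw [hvol]
    norm_num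
    congr 1
  | succ d IH =>
    set i : Fin (d + 1) := Fin.last d with hi
    set p : Fin (d + 2) := (Fin.last d).castSucc with hp
    set a : ℕ := α p with ha
    set α' : Fin (d + 1) → ℕ := fun j => α (p.succAbove j) with hα'
    set s' : ℕ := ∑ j, α' j with hs'
    set S : Set (Fin (d + 1) → ℝ) := {t | (∀ j, 0 ≤ t j) ∧ (∑ j, t j) ≤ X} with hS
    set F : (Fin (d + 1) → ℝ) → ℝ := fun t =>
      laguerreFun (α (Fin.last (d + 1))) (X - ∑ j, t j) *
        ∏ j : Fin (d + 1), laguerreFun (α j.castSucc) (t j) with hF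
    have hFc : Continuous F := by
      apply Continuous.mul
      · exact (continuous_laguerreFun _).comp
          (continuous_const.sub (continuous_finset_sum _ fun j _ => continuous_apply j))
      · exact continuous_finset_prod _ fun j _ =>
          (continuous_laguerreFun _).comp (continuous_apply j)
    have hSm : MeasurableSet S := (isClosed_simplex (d+1) X).measurableSet
    have hFint : IntegrableOn F S volume :=
      hFc.continuousOn.integrableOn_compact (isCompact_simplex (d+1) X)
    set e : ℝ × (Fin d → ℝ) ≃ᵐ (Fin (d + 1) → ℝ) :=
      (MeasurableEquiv.piFinSuccAbove (fun _ => ℝ) i).symm with he_def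
    have hem : MeasurePreserving e :=
      (volume_preserving_piFinSuccAbove (fun _ : Fin (d + 1) => ℝ) i).symm _
    have he : ∀ (x : ℝ) (y : Fin d → ℝ), e (x, y) = i.insertNth x y := by
      intro x y
      simp [he_def, MeasurableEquiv.piFinSuccAbove_symm_apply, Fin.insertNthEquiv]
    -- key index identities
    have hidx1 : ∀ j : Fin d, (i.succAbove j).castSucc = p.succAbove j.castSucc := by
      intro j
      rw [hi, Fin.succAbove_last, hp]
      rw [Fin.succAbove_of_castSucc_lt]
      exact Fin.castSucc_lt_castSucc_iff.mpr (Fin.castSucc_lt_last j)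
    have hidx2 : α' (Fin.last d) = α (Fin.last (d + 1)) := by
      rw [hα']
      simp only
      rw [hp, Fin.succAbove_of_le_castSucc _ _ le_rfl, Fin.succ_last]
    have hsum_split : ∑ j, α j = a + s' := by
      rw [hs', ha, hα', Fin.sum_univ_succAbove α p]
    -- value of inner vertical slice
    have hmem : ∀ (x : ℝ) (y : Fin d → ℝ), 0 ≤ x →
        (e (x, y) ∈ S ↔ ((∀ j, 0 ≤ y j) ∧ (∑ j, y j) ≤ X - x)) := by
      intro x y hx
      rw [he, hS]
      simp only [Set.mem_setOf_eq]
      rw [Fin.sum_univ_succAbove _ i, i.forall_iff_succAbove]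
      simp only [Fin.insertNth_apply_same, Fin.insertNth_apply_succAbove]
      constructor
      · rintro ⟨⟨-, h2⟩, h3⟩; exact ⟨h2, by linarith⟩
      · rintro ⟨h2, h3⟩; exact ⟨⟨hx, h2⟩, by linarith⟩
    have hval : ∀ (x : ℝ) (y : Fin d → ℝ), F (e (x, y)) =
        laguerreFun a x * (laguerreFun (α' (Fin.last d)) ((X - x) - ∑ j, y j) *
          ∏ j : Fin d, laguerreFun (α' j.castSucc) (y j)) := by
      intro x y
      rw [he, hF]
      simp only
      rw [Fin.sum_univ_succAbove (fun j => i.insertNth x y j) i]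
      rw [Fin.prod_univ_succAbove (fun j => laguerreFun (α j.castSucc) ((i.insertNth x y : Fin (d+1) → ℝ) j)) i]
      simp only [Fin.insertNth_apply_same, Fin.insertNth_apply_succAbove]
      have : ∀ j : Fin d, α ((i.succAbove j).castSucc) = α' j.castSucc := by
        intro j; rw [hα', hidx1]
      rw [Finset.prod_congr rfl fun j _ => by rw [this j]]
      have hmid : α (i.castSucc) = a := by rw [ha, hp, hi]
      have harg : X - (x + ∑ j, y j) = X - x - ∑ j, y j := by ring
      rw [hmid, ← hidx2, harg]
      ring
    -- slice computation
    have hslice : (fun x : ℝ => ∫ y : Fin d → ℝ, S.indicator F (e (x, y)))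
        = (Set.Icc 0 X).indicator (fun x => laguerreFun a x *
            ∑ k ∈ Finset.range (d + 1),
              (d.choose k : ℝ) * (-1 : ℝ) ^ k * laguerreFun (s' + k) (X - x)) := by
      funext x
      by_cases hx : x ∈ Set.Icc 0 X
      · rw [Set.indicator_of_mem hx]
        have hx0 : 0 ≤ x := hx.1
        have hxX : 0 ≤ X - x := by linarith [hx.2]
        have hinner : ∀ y : Fin d → ℝ, S.indicator F (e (x, y))
            = Set.indicator {y : Fin d → ℝ | (∀ j, 0 ≤ y j) ∧ (∑ j, y j) ≤ X - x}
                (fun y => laguerreFun a x * (laguerreFun (α' (Fin.last d)) ((X - x) - ∑ j, y j) *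
                  ∏ j : Fin d, laguerreFun (α' j.castSucc) (y j))) y := by
          intro y
          by_cases hy : y ∈ {y : Fin d → ℝ | (∀ j, 0 ≤ y j) ∧ (∑ j, y j) ≤ X - x}
          · rw [Set.indicator_of_mem ((hmem x y hx0).mpr hy), Set.indicator_of_mem hy, hval]
          · rw [Set.indicator_of_notMem (fun h => hy ((hmem x y hx0).mp h)),
              Set.indicator_of_notMem hy]
        rw [MeasureTheory.integral_congr_ae (Filter.Eventually.of_forall hinner),
          MeasureTheory.integral_indicator (isClosed_simplex d (X - x)).measurableSet,
          integral_const_mul, IH α' (X - x) hxX]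
      · rw [Set.indicator_of_notMem hx]
        have hzero : ∀ y : Fin d → ℝ, S.indicator F (e (x, y)) = 0 := by
          intro y
          apply Set.indicator_of_notMem
          rw [he]
          intro hmem'
          rcases hmem' with ⟨h0, hsle⟩
          simp only [Set.mem_Icc, not_and_or, not_le] at hx
          rcases hx with hx | hx
          · have := h0 i
            rw [Fin.insertNth_apply_same] at this
            linarith
          · have h1 := Finset.single_le_sum (f := (i.insertNth x y : Fin (d+1) → ℝ))
              (fun j _ => h0 j) (Finset.mem_univ i)
            rw [Fin.insertNth_apply_same] at h1
            have h2 : (∑ j, (i.insertNth x y : Fin (d+1) → ℝ) j) ≤ X := hsle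
            linarith
        simp only [hzero, integral_zero]
    -- Fubini
    have hprod : (∫ t in S, F t)
        = ∫ x : ℝ, ∫ y : Fin d → ℝ, S.indicator F (e (x, y)) := by
      rw [← MeasureTheory.integral_indicator hSm, ← hem.integral_comp' (S.indicator F)]
      rw [show ((volume : Measure (ℝ × (Fin d → ℝ)))) = (volume : Measure ℝ).prod volume from
        Measure.volume_eq_prod _ _]
      rw [MeasureTheory.integral_prod]
      rw [← Measure.volume_eq_prod]
      have hind : Integrable (S.indicator F) volume :=
        (integrable_indicator_iff hSm).2 hFint
      exact ((hem.integrable_comp_emb e.measurableEmbedding).2 hind)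
    rw [hprod, hslice, MeasureTheory.integral_indicator measurableSet_Icc]
    -- pull the sum out
    have hcont2 : ∀ k : ℕ, Continuous fun x : ℝ => laguerreFun a x * laguerreFun (s' + k) (X - x) := by
      intro k
      exact (continuous_laguerreFun a).mul
        ((continuous_laguerreFun _).comp (continuous_const.sub continuous_id))
    have hswap : (∫ x in Set.Icc 0 X, laguerreFun a x *
          ∑ k ∈ Finset.range (d + 1),
            (d.choose k : ℝ) * (-1 : ℝ) ^ k * laguerreFun (s' + k) (X - x))
        = ∑ k ∈ Finset.range (d + 1), (d.choose k : ℝ) * (-1 : ℝ) ^ k *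
            ∫ x in Set.Icc 0 X, laguerreFun a x * laguerreFun (s' + k) (X - x) := by
      rw [setIntegral_congr_fun measurableSet_Icc (g := fun x => ∑ k ∈ Finset.range (d + 1),
        (d.choose k : ℝ) * (-1 : ℝ) ^ k * (laguerreFun a x * laguerreFun (s' + k) (X - x)))
        (fun x _ => by rw [Finset.mul_sum]; exact Finset.sum_congr rfl fun k _ => by ring)]
      rw [MeasureTheory.integral_finset_sum _ (fun k _ =>
        (Continuous.integrableOn_Icc (f := fun x => (d.choose k : ℝ) * (-1 : ℝ) ^ k * (laguerreFun a x * laguerreFun (s' + k) (X - x))) (continuous_const.mul (hcont2 k))))]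
      exact Finset.sum_congr rfl fun k _ => integral_const_mul _ _
    rw [hswap]
    -- evaluate each convolution integral
    have hconv : ∀ k : ℕ, (∫ x in Set.Icc 0 X, laguerreFun a x * laguerreFun (s' + k) (X - x))
        = laguerreFun (a + (s' + k)) X - laguerreFun (a + (s' + k) + 1) X := by
      intro k
      rw [MeasureTheory.integral_Icc_eq_integral_Ioc,
        ← intervalIntegral.integral_of_le hX, laguerre_conv]
    rw [Finset.sum_congr rfl fun k _ => by rw [hconv k]]
    have := pascal_sum d (fun k => laguerreFun ((∑ j, α j) + k) X)
    rw [← this]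
    refine Finset.sum_congr rfl fun k _ => ?_
    rw [hsum_split]
    congr 2
    · congr 1; omega
    · congr 1; omega
end
end

section
/- For every n ∈ ℕ and all t ∈ ℝ, (d/dt) [ e^{−t/2} T_n(t) ] = ((−1)^{n+1}/4) L_n(t) e^{−t/2}. -/
open MeasureTheory

noncomputable section

/-- `T_n(X) = Σ_{k=0}^{n−1} (−1)^k L_k(X) + ((−1)^n/2) L_n(X)`. -/
def Tfun (n : ℕ) (X : ℝ) : ℝ :=
  (∑ k ∈ Finset.range n, (-1 : ℝ) ^ k * laguerreFun k X) +
    (-1 : ℝ) ^ n / 2 * laguerreFun n X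

/-- `V_α(X) = 4 e^{−X/2} Σ_{k=0}^{d−1} C(d−1,k) T_{|α|+k}(X)`. -/
def Vfun (d : ℕ) (α : Fin d → ℕ) (X : ℝ) : ℝ :=
  4 * Real.exp (-X / 2) *
    ∑ k ∈ Finset.range d, ((d - 1).choose k : ℝ) * Tfun ((∑ j, α j) + k) X

/-- Derivative of the `n`-th Laguerre polynomial. -/
def lagD (n : ℕ) (t : ℝ) : ℝ :=
  -∑ k ∈ Finset.range n, (n.choose (k + 1) : ℝ) * (-t) ^ k / (k.factorial : ℝ)

lemma hasDerivAt_lag (n : ℕ) (t : ℝ) : HasDerivAt (laguerreFun n) (lagD n t) t := by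
  have hneg : HasDerivAt (fun x : ℝ => -x) (-1) t := (hasDerivAt_id t).neg
  have hterm : ∀ k, HasDerivAt (fun x : ℝ => (n.choose k : ℝ) * (-x) ^ k / (k.factorial : ℝ))
      ((n.choose k : ℝ) * ((k : ℝ) * (-t) ^ (k - 1) * (-1)) / (k.factorial : ℝ)) t := by
    intro k
    exact (((hasDerivAt_pow k (-t)).comp t hneg).const_mul _).div_const _
  have h := HasDerivAt.fun_sum (u := Finset.range (n + 1))
    (fun k _ => hterm k)
  convert h using 1
  rfl
  rfl
  rfl
  rw [lagD, Finset.sum_range_succ']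
  simp only [Nat.cast_zero, zero_mul, mul_zero, zero_div, add_zero]
  rw [neg_eq_iff_eq_neg, ← Finset.sum_neg_distrib]
  refine Finset.sum_congr rfl fun k _ => ?_
  simp only [Nat.add_sub_cancel]
  have hfac : ((k + 1).factorial : ℝ) = (k + 1) * (k.factorial : ℝ) := by
    push_cast [Nat.factorial_succ]; ring
  rw [hfac]
  push_cast
  field_simp [hfac]

lemma lagD_succ (n : ℕ) (t : ℝ) : lagD (n + 1) t = lagD n t - laguerreFun n t := by
  unfold lagD laguerreFun
  have h1 : ∀ k ∈ Finset.range (n + 1),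
      ((n + 1).choose (k + 1) : ℝ) * (-t) ^ k / (k.factorial : ℝ) =
      (n.choose (k + 1) : ℝ) * (-t) ^ k / (k.factorial : ℝ) +
      (n.choose k : ℝ) * (-t) ^ k / (k.factorial : ℝ) := by
    intro k _
    rw [Nat.choose_succ_succ]
    push_cast
    ring
  rw [Finset.sum_congr rfl h1, Finset.sum_add_distrib]
  have h2 : ∑ k ∈ Finset.range (n + 1), (n.choose (k + 1) : ℝ) * (-t) ^ k / (k.factorial : ℝ)
      = ∑ k ∈ Finset.range n, (n.choose (k + 1) : ℝ) * (-t) ^ k / (k.factorial : ℝ) := by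
    rw [Finset.sum_range_succ, Nat.choose_succ_self]
    simp
  rw [h2]
  ring

lemma Tfun_succ (n : ℕ) (X : ℝ) :
    Tfun (n + 1) X = Tfun n X + (-1 : ℝ) ^ n / 2 * laguerreFun n X
      + (-1 : ℝ) ^ (n + 1) / 2 * laguerreFun (n + 1) X := by
  unfold Tfun
  rw [Finset.sum_range_succ]
  ring

lemma hasDerivAt_T (n : ℕ) (t : ℝ) :
    HasDerivAt (Tfun n) (Tfun n t / 2 - (-1 : ℝ) ^ n / 4 * laguerreFun n t) t := by
  induction n with
  | zero =>
      have h0 : Tfun 0 t / 2 - (-1 : ℝ) ^ 0 / 4 * laguerreFun 0 t = 0 := by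
        simp [Tfun, laguerreFun]; norm_num
      have hT : Tfun 0 = fun _ : ℝ => (1 : ℝ) / 2 := by
        funext x; simp [Tfun, laguerreFun]
      rw [h0, hT]
      exact hasDerivAt_const t _
  | succ n ih =>
      have h : HasDerivAt (Tfun (n + 1))
          ((Tfun n t / 2 - (-1 : ℝ) ^ n / 4 * laguerreFun n t)
            + (-1 : ℝ) ^ n / 2 * lagD n t
            + (-1 : ℝ) ^ (n + 1) / 2 * (lagD n t - laguerreFun n t)) t := by
        have := (ih.add (((hasDerivAt_lag n t).const_mul ((-1 : ℝ) ^ n / 2)))).add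
          (((hasDerivAt_lag (n + 1) t).const_mul ((-1 : ℝ) ^ (n + 1) / 2)))
        rw [lagD_succ] at this
        refine this.congr_of_eventuallyEq ?_
        filter_upwards with x
        rw [Tfun_succ]
        rfl
      convert h using 1
      rw [Tfun_succ, pow_succ]
      ring

theorem deriv_exp_mul_T (n : ℕ) (t : ℝ) :
    deriv (fun s => Real.exp (-s / 2) * Tfun n s) t =
      (-1 : ℝ) ^ (n + 1) / 4 * laguerreFun n t * Real.exp (-t / 2) := by
  have hexp : HasDerivAt (fun s : ℝ => Real.exp (-s / 2)) (Real.exp (-t / 2) * (-1 / 2)) t := by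
    have h1 : HasDerivAt (fun s : ℝ => -s / 2) (-1 / 2) t := by
      simpa using ((hasDerivAt_id t).neg.div_const 2)
    exact (Real.hasDerivAt_exp (-t / 2)).comp t h1
  have h := hexp.mul (hasDerivAt_T n t)
  rw [show (fun s => Real.exp (-s / 2) * Tfun n s) = (fun s : ℝ => Real.exp (-s / 2)) * Tfun n from rfl, h.deriv, pow_succ]
  ring
end
end
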